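/- arXiv:1801.05008 — 3 statements merged into one kernel-verified Lean document; each statement's English description precedes it below -/
import Mathlib

section
/- Let α > 2. Then R(α,α) ≥ (2 − 2^{−(α+1)}) · G(α+1,α) − (2 − 2^{2−α}) · (1 + 2^{1−α} + 2^{2−α}/(α−2)) · G(α,α), where R(α,α) = F(α+1,α) − F(α,α), F(β,x) = ∫₀^∞ t^β / (sinh(xt)·(1 + t²)) dt, and G(β,x) = ∫₀^∞ t^β · e^{−xt} / (1 + t²) dt. -/
open MeasureTheory Filter Real

/-- `F(β,x) = ∫₀^∞ t^β / (sinh(xt)·(1+t²)) dt`. -/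
noncomputable def Ffun (β x : ℝ) : ℝ :=
  ∫ t in Set.Ioi (0:ℝ), t ^ β / (Real.sinh (x * t) * (1 + t ^ 2))

/-- `G(β,x) = ∫₀^∞ t^β·e^{−xt}/(1+t²) dt`. -/
noncomputable def Gfun (β x : ℝ) : ℝ :=
  ∫ t in Set.Ioi (0:ℝ), t ^ β * Real.exp (-(x * t)) / (1 + t ^ 2)

namespace Stmt17

open Set

lemma inv_sinh_ge {u : ℝ} (hu : 0 < u) : 2 * Real.exp (-u) ≤ (Real.sinh u)⁻¹ := by
  have hs : 0 < Real.sinh u := Real.sinh_pos_iff.mpr hu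
  rw [inv_eq_one_div, le_div_iff₀ hs]
  have h1 : Real.exp (-u) * Real.exp u = 1 := by rw [← Real.exp_add]; simp
  rw [Real.sinh_eq]
  have h2 : (0:ℝ) < Real.exp (-u) := Real.exp_pos _
  nlinarith [mul_pos h2 h2]

lemma inv_sinh_le {u : ℝ} (hu : 0 < u) :
    (Real.sinh u)⁻¹ ≤ 2 * Real.exp (-u) + Real.exp (-u) / u := by
  have hs : 0 < Real.sinh u := Real.sinh_pos_iff.mpr hu
  rw [inv_eq_one_div, div_le_iff₀ hs]
  have h1 : Real.exp (-u) * Real.exp u = 1 := by rw [← Real.exp_add]; simp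
  have h3 : 2*u + 1 ≤ Real.exp (2*u) := by
    have := Real.add_one_le_exp (2*u); linarith
  have h4 : Real.exp (2*u) = Real.exp u * Real.exp u := by
    rw [← Real.exp_add]; ring_nf
  have h2 : (0:ℝ) < Real.exp (-u) := Real.exp_pos _
  have h5 : (0:ℝ) < Real.exp u := Real.exp_pos _
  rw [Real.sinh_eq]
  have key : (2*u+1) * (Real.exp (-u) * Real.exp (-u)) ≤ 1 := by
    have := mul_le_mul_of_nonneg_right h3 (le_of_lt (mul_pos h2 h2))
    calc (2*u+1) * (Real.exp (-u) * Real.exp (-u))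
        ≤ Real.exp (2*u) * (Real.exp (-u) * Real.exp (-u)) := this
      _ = (Real.exp u * Real.exp (-u)) * (Real.exp u * Real.exp (-u)) := by rw [h4]; ring
      _ = 1 := by rw [mul_comm (Real.exp u)]; rw [h1]; ring
  have hu' : u ≠ 0 := ne_of_gt hu
  have hid : (2 * Real.exp (-u) + Real.exp (-u) / u) * ((Real.exp u - Real.exp (-u))/2) - 1
      = ((2*u+1) * (Real.exp (-u) * Real.exp u - Real.exp (-u) * Real.exp (-u)) - 2*u) / (2*u) := by
    field_simp
  have hnum : 0 ≤ (2*u+1) * (Real.exp (-u) * Real.exp u - Real.exp (-u) * Real.exp (-u)) - 2*u := by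
    rw [h1]; nlinarith
  have := div_nonneg hnum (by linarith : (0:ℝ) ≤ 2*u)
  linarith [hid ▸ this]

/-- dominating Gamma-type integrand -/
lemma gamma_int {β : ℝ} (hβ : 0 < β) :
    IntegrableOn (fun t : ℝ => Real.exp (-t) * t ^ β) (Ioi 0) := by
  have := Real.GammaIntegral_convergent (s := β + 1) (by linarith)
  simpa using this

lemma meas_G {β : ℝ} (hβ0 : 0 ≤ β) (x : ℝ) :
    Measurable fun t : ℝ => t ^ β * Real.exp (-(x * t)) / (1 + t ^ 2) := by
  apply Measurable.div
  · exact ((Real.continuous_rpow_const hβ0).measurable).mul ((measurable_const.mul measurable_id).neg.exp)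
  · exact measurable_const.add (measurable_id.pow_const 2)

lemma integrable_G {β x : ℝ} (hβ : 0 < β) (hx : 1 ≤ x) :
    IntegrableOn (fun t : ℝ => t ^ β * Real.exp (-(x * t)) / (1 + t ^ 2)) (Ioi 0) := by
  apply (gamma_int hβ).mono' ((meas_G (le_of_lt hβ) x).aestronglyMeasurable)
  filter_upwards [self_mem_ae_restrict measurableSet_Ioi] with t ht
  have ht0 : (0:ℝ) < t := ht
  have h1 : (0:ℝ) < 1 + t ^ 2 := by positivity
  have hnn : 0 ≤ t ^ β * Real.exp (-(x*t)) / (1 + t ^ 2) := by positivity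
  rw [Real.norm_eq_abs, abs_of_nonneg hnn]
  have hle : Real.exp (-(x*t)) ≤ Real.exp (-t) := by
    apply Real.exp_le_exp.2; nlinarith
  calc t ^ β * Real.exp (-(x*t)) / (1 + t ^ 2) ≤ t ^ β * Real.exp (-(x*t)) := by
        apply div_le_self (by positivity); nlinarith
    _ ≤ t ^ β * Real.exp (-t) := by
        apply mul_le_mul_of_nonneg_left hle (Real.rpow_nonneg ht0.le _)
    _ = Real.exp (-t) * t ^ β := by ring

lemma G_nonneg (β x : ℝ) : 0 ≤ Gfun β x := by
  apply setIntegral_nonneg measurableSet_Ioi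
  intro t ht
  have : (0:ℝ) < t := ht
  positivity

lemma meas_F {β : ℝ} (hβ0 : 0 ≤ β) (x : ℝ) :
    Measurable fun t : ℝ => t ^ β / (Real.sinh (x * t) * (1 + t ^ 2)) := by
  apply Measurable.div
  · exact (Real.continuous_rpow_const hβ0).measurable
  · exact (Real.measurable_sinh.comp (measurable_const.mul measurable_id)).mul
      (measurable_const.add (measurable_id.pow_const 2))

lemma integrable_F {β x : ℝ} (hβ : 1 ≤ β) (hx : 1 ≤ x) :
    IntegrableOn (fun t : ℝ => t ^ β / (Real.sinh (x * t) * (1 + t ^ 2))) (Ioi 0) := by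
  have hβ0 : (0:ℝ) < β := by linarith
  have hβ1 : (0:ℝ) < β - 1 ∨ β - 1 = 0 := by rcases eq_or_lt_of_le hβ with h|h; · right; linarith
                                             · left; linarith
  have hint : IntegrableOn (fun t : ℝ => 2 * (Real.exp (-t) * t ^ β)
      + x⁻¹ * (Real.exp (-t) * t ^ (β-1))) (Ioi 0) := by
    apply Integrable.add
    · exact (gamma_int hβ0).const_mul 2
    · have : IntegrableOn (fun t : ℝ => Real.exp (-t) * t ^ (β-1)) (Ioi 0) := by
        have := Real.GammaIntegral_convergent (s := β) hβ0
        simpa using this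
      exact this.const_mul _
  apply hint.mono' ((meas_F (by linarith : (0:ℝ) ≤ β) x).aestronglyMeasurable)
  filter_upwards [self_mem_ae_restrict measurableSet_Ioi] with t ht
  have ht0 : (0:ℝ) < t := ht
  have hu : 0 < x * t := by nlinarith
  have hs : 0 < Real.sinh (x*t) := Real.sinh_pos_iff.mpr hu
  have h1 : (0:ℝ) < 1 + t ^ 2 := by positivity
  have hnn : 0 ≤ t ^ β / (Real.sinh (x*t) * (1 + t ^ 2)) := by positivity
  rw [Real.norm_eq_abs, abs_of_nonneg hnn]
  have key := inv_sinh_le hu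
  have htβ : 0 ≤ t ^ β := Real.rpow_nonneg ht0.le _
  have hexple : Real.exp (-(x*t)) ≤ Real.exp (-t) := by
    apply Real.exp_le_exp.2; nlinarith
  have step1 : t ^ β / (Real.sinh (x*t) * (1 + t ^ 2)) ≤ t ^ β * (Real.sinh (x*t))⁻¹ := by
    rw [div_eq_mul_inv, mul_inv]
    have : (Real.sinh (x*t))⁻¹ * (1+t^2)⁻¹ ≤ (Real.sinh (x*t))⁻¹ * 1 := by
      apply mul_le_mul_of_nonneg_left _ (inv_nonneg.2 hs.le)
      rw [inv_le_one_iff₀]; right; nlinarith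
    nlinarith [mul_le_mul_of_nonneg_left this htβ]
  have step2 : t ^ β * (Real.sinh (x*t))⁻¹ ≤
      t ^ β * (2 * Real.exp (-(x*t)) + Real.exp (-(x*t)) / (x*t)) :=
    mul_le_mul_of_nonneg_left key htβ
  have hrw : t ^ β / t = t ^ (β - 1) := by
    rw [Real.rpow_sub_one (ne_of_gt ht0)]
  have step3 : t ^ β * (2 * Real.exp (-(x*t)) + Real.exp (-(x*t)) / (x*t)) ≤
      2 * (Real.exp (-t) * t ^ β) + x⁻¹ * (Real.exp (-t) * t ^ (β-1)) := by
    have e1 : t ^ β * (2 * Real.exp (-(x*t))) ≤ 2 * (Real.exp (-t) * t ^ β) := by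
      nlinarith [mul_le_mul_of_nonneg_left hexple htβ]
    have e2 : t ^ β * (Real.exp (-(x*t)) / (x*t)) ≤ x⁻¹ * (Real.exp (-t) * t ^ (β-1)) := by
      rw [← hrw]
      rw [div_eq_mul_inv, mul_inv]
      have hexp2 : 0 < Real.exp (-(x*t)) := Real.exp_pos _
      calc t ^ β * (Real.exp (-(x*t)) * (x⁻¹ * t⁻¹))
          = x⁻¹ * (Real.exp (-(x*t)) * (t ^ β / t)) := by ring
        _ ≤ x⁻¹ * (Real.exp (-t) * (t ^ β / t)) := by
            apply mul_le_mul_of_nonneg_left _ (by positivity)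
            apply mul_le_mul_of_nonneg_right hexple (by positivity)
    calc t ^ β * (2 * Real.exp (-(x*t)) + Real.exp (-(x*t)) / (x*t))
        = t ^ β * (2 * Real.exp (-(x*t))) + t ^ β * (Real.exp (-(x*t)) / (x*t)) := by ring
      _ ≤ 2 * (Real.exp (-t) * t ^ β) + x⁻¹ * (Real.exp (-t) * t ^ (β-1)) := add_le_add e1 e2
  linarith


lemma F1_ge {α : ℝ} (hα : 2 < α) : 2 * Gfun (α+1) α ≤ Ffun (α+1) α := by
  have hα1 : (1:ℝ) ≤ α := by linarith
  rw [Gfun, Ffun, ← MeasureTheory.integral_const_mul]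
  apply setIntegral_mono_on
  · exact (integrable_G (by linarith) hα1).const_mul 2
  · exact integrable_F (by linarith) hα1
  · exact measurableSet_Ioi
  · intro t ht
    have ht0 : (0:ℝ) < t := ht
    have hu : 0 < α * t := by nlinarith
    have hs : 0 < Real.sinh (α*t) := Real.sinh_pos_iff.mpr hu
    have h1 : (0:ℝ) < 1 + t ^ 2 := by positivity
    have key := inv_sinh_ge hu
    have htβ : 0 ≤ t ^ (α+1) := Real.rpow_nonneg ht0.le _
    calc 2 * (t ^ (α+1) * Real.exp (-(α*t)) / (1 + t^2))
        = (t ^ (α+1) / (1+t^2)) * (2 * Real.exp (-(α*t))) := by ring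
      _ ≤ (t ^ (α+1) / (1+t^2)) * (Real.sinh (α*t))⁻¹ := by
          apply mul_le_mul_of_nonneg_left key (by positivity)
      _ = t ^ (α+1) / (Real.sinh (α*t) * (1+t^2)) := by
          rw [div_eq_mul_inv, div_eq_mul_inv, mul_inv]
          ring

lemma phi_le {α k s : ℝ} (hα0 : 0 < α) (hk : 1 ≤ k) (hs0 : 0 < s) :
    (s/k) ^ α * Real.exp (-(α*s)) / (1 + (s/k) ^ 2)
      ≤ k ^ ((2:ℝ)-α) * (s ^ α * Real.exp (-(α*s)) / (1 + s ^ 2)) := by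
  have hk0 : (0:ℝ) < k := lt_of_lt_of_le one_pos hk
  have key1 : (s/k) ^ α = s ^ α * k ^ (-α) := by
    rw [Real.div_rpow hs0.le hk0.le, Real.rpow_neg hk0.le, div_eq_mul_inv]
  have hden : (0:ℝ) < 1 + (s/k) ^ 2 := by positivity
  have hden2 : (0:ℝ) < 1 + s ^ 2 := by positivity
  have h3 : (1 + s^2)/k^2 ≤ 1 + (s/k)^2 := by
    rw [div_pow, div_le_iff₀ (by positivity : (0:ℝ) < k^2)]
    have : (1:ℝ) ≤ k^2 := by nlinarith
    have hsk : s^2/k^2 * k^2 = s^2 := by field_simp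
    nlinarith
  have key2 : (1 + (s/k)^2)⁻¹ ≤ k^2 * (1 + s^2)⁻¹ := by
    have h4 : (0:ℝ) < (1 + s^2)/k^2 := by positivity
    have := inv_anti₀ h4 h3
    rw [← div_eq_mul_inv]
    calc (1 + (s/k)^2)⁻¹ ≤ ((1 + s^2)/k^2)⁻¹ := this
      _ = k^2 / (1 + s^2) := by field_simp
  have e1 : k ^ ((2:ℝ)) = k ^ 2 := by
    rw [show ((2:ℝ)) = ((2:ℕ):ℝ) by norm_num, Real.rpow_natCast]
  have e2 : k ^ ((2:ℝ)-α) = k ^ ((2:ℝ)) * k ^ (-α) := by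
    rw [← Real.rpow_add hk0]; ring_nf
  have hE : (0:ℝ) < Real.exp (-(α*s)) := Real.exp_pos _
  have hsα : (0:ℝ) ≤ s ^ α := Real.rpow_nonneg hs0.le _
  have hkα : (0:ℝ) ≤ k ^ (-α) := Real.rpow_nonneg hk0.le _
  calc (s/k) ^ α * Real.exp (-(α*s)) / (1 + (s/k) ^ 2)
      = (s ^ α * Real.exp (-(α*s))) * (k ^ (-α) * (1 + (s/k)^2)⁻¹) := by
        rw [key1]; ring
    _ ≤ (s ^ α * Real.exp (-(α*s))) * (k ^ (-α) * (k^2 * (1 + s^2)⁻¹)) := by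
        apply mul_le_mul_of_nonneg_left _ (by positivity)
        exact mul_le_mul_of_nonneg_left key2 hkα
    _ = k ^ ((2:ℝ)-α) * (s ^ α * Real.exp (-(α*s)) / (1 + s ^ 2)) := by
        rw [e2, e1]; ring

lemma H_le {α : ℝ} (hα : 2 < α) {k : ℝ} (hk : 1 ≤ k) :
    (∫ t in Ioi (0:ℝ), t ^ α * Real.exp (-((k*α)*t)) / (1 + t ^ 2))
      ≤ k ^ (1-α) * Gfun α α := by
  have hk0 : (0:ℝ) < k := by linarith
  have hα0 : (0:ℝ) < α := by linarith
  have hα1 : (1:ℝ) ≤ α := by linarith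
  have hGint := integrable_G (x := α) hα0 hα1
  have hφmeas : Measurable fun s : ℝ => (s/k) ^ α * Real.exp (-(α*s)) / (1 + (s/k) ^ 2) := by
    apply Measurable.div
    · exact ((Real.continuous_rpow_const hα0.le).measurable.comp
        (measurable_id.div_const k)).mul ((measurable_const.mul measurable_id).neg.exp)
    · exact measurable_const.add ((measurable_id.div_const k).pow_const 2)
  have hφint : IntegrableOn (fun s : ℝ => (s/k) ^ α * Real.exp (-(α*s)) / (1 + (s/k) ^ 2))
      (Ioi (0:ℝ)) := by
    apply (hGint.const_mul (k ^ ((2:ℝ)-α))).mono' hφmeas.aestronglyMeasurable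
    filter_upwards [self_mem_ae_restrict measurableSet_Ioi] with s hs
    have hs0 : (0:ℝ) < s := hs
    have hsk : 0 < s/k := by positivity
    have hnn : 0 ≤ (s/k) ^ α * Real.exp (-(α*s)) / (1 + (s/k) ^ 2) := by positivity
    rw [Real.norm_eq_abs, abs_of_nonneg hnn]
    exact phi_le hα0 hk hs0
  have hshape : ∀ t : ℝ, t ^ α * Real.exp (-((k*α)*t)) / (1 + t ^ 2)
      = (fun s : ℝ => (s/k) ^ α * Real.exp (-(α*s)) / (1 + (s/k) ^ 2)) (k*t) := by
    intro t
    simp only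
    rw [mul_div_cancel_left₀ _ (ne_of_gt hk0)]
    ring_nf
  have hcomp : (∫ t in Ioi (0:ℝ),
        (fun s : ℝ => (s/k) ^ α * Real.exp (-(α*s)) / (1 + (s/k) ^ 2)) (k*t))
      = k⁻¹ * ∫ s in Ioi (0:ℝ), (s/k) ^ α * Real.exp (-(α*s)) / (1 + (s/k) ^ 2) := by
    have h := MeasureTheory.integral_comp_mul_left_Ioi
      (fun s : ℝ => (s/k) ^ α * Real.exp (-(α*s)) / (1 + (s/k) ^ 2)) 0 hk0
    rw [mul_zero] at h
    simpa [smul_eq_mul] using h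
  have hφle : (∫ s in Ioi (0:ℝ), (s/k) ^ α * Real.exp (-(α*s)) / (1 + (s/k) ^ 2))
      ≤ k ^ ((2:ℝ)-α) * Gfun α α := by
    rw [Gfun, ← MeasureTheory.integral_const_mul]
    apply setIntegral_mono_on hφint (hGint.const_mul _) measurableSet_Ioi
    intro s hs
    exact phi_le hα0 hk hs
  calc (∫ t in Ioi (0:ℝ), t ^ α * Real.exp (-((k*α)*t)) / (1 + t ^ 2))
      = k⁻¹ * ∫ s in Ioi (0:ℝ), (s/k) ^ α * Real.exp (-(α*s)) / (1 + (s/k) ^ 2) := by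
        rw [← hcomp]; exact MeasureTheory.integral_congr_ae (ae_of_all _ fun t => hshape t)
    _ ≤ k⁻¹ * (k ^ ((2:ℝ)-α) * Gfun α α) := by
        apply mul_le_mul_of_nonneg_left hφle (by positivity)
    _ = k ^ (1-α) * Gfun α α := by
        rw [← Real.rpow_neg_one k, ← mul_assoc, ← Real.rpow_add hk0]
        congr 2
        ring


lemma amgm {A B m c : ℝ} (hA : 0 < A) (hB : 0 < B) (hm : 0 < m) (hc : 0 ≤ c)
    (hAB : A * B ≤ m ^ 2) : 2 * m ^ (-c) ≤ A ^ (-c) + B ^ (-c) := by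
  have h1 : (A ^ (-c/2)) ^ 2 = A ^ (-c) := by
    rw [sq, ← Real.rpow_add hA]; ring_nf
  have h2 : (B ^ (-c/2)) ^ 2 = B ^ (-c) := by
    rw [sq, ← Real.rpow_add hB]; ring_nf
  have h3 : A ^ (-c/2) * B ^ (-c/2) = (A*B) ^ (-c/2) := by
    rw [Real.mul_rpow hA.le hB.le]
  have h4 : (m^2 : ℝ) ^ (-c/2) ≤ (A*B) ^ (-c/2) :=
    Real.rpow_le_rpow_of_nonpos (mul_pos hA hB) hAB (by linarith [hc])
  have h5 : (m^2 : ℝ) ^ (-c/2) = m ^ (-c) := by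
    rw [← Real.rpow_natCast m 2, ← Real.rpow_mul hm.le]
    congr 1
    ring
  have h6 := two_mul_le_add_sq (A ^ (-c/2)) (B ^ (-c/2))
  calc 2 * m ^ (-c) = 2 * ((m^2:ℝ) ^ (-c/2)) := by rw [h5]
    _ ≤ 2 * ((A*B) ^ (-c/2)) := by linarith
    _ = 2 * (A ^ (-c/2)) * (B ^ (-c/2)) := by rw [← h3]; ring
    _ ≤ (A ^ (-c/2))^2 + (B ^ (-c/2))^2 := h6
    _ = A ^ (-c) + B ^ (-c) := by rw [h1, h2]

lemma star {p m : ℝ} (hp : 0 < p) (hm : 3 ≤ m) :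
    2 * p * m ^ (-(p+1)) ≤ (m-1) ^ (-p) - (m+1) ^ (-p) := by
  have hm0 : (0:ℝ) < m := by linarith
  set ψ : ℝ → ℝ := fun x => (m-x) ^ (-p) - (m+x) ^ (-p) - 2*p*m^(-(p+1))*x with hψ
  have hder : ∀ x ∈ Icc (0:ℝ) 1, HasDerivAt ψ
      (p * (m-x) ^ (-p-1) + p * (m+x) ^ (-p-1) - 2*p*m^(-(p+1))) x := by
    intro x hx
    obtain ⟨hx0, hx1⟩ := hx
    have hmx : (0:ℝ) < m - x := by linarith
    have hpx : (0:ℝ) < m + x := by linarith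
    have d1 : HasDerivAt (fun x : ℝ => (m-x) ^ (-p)) (p * (m-x) ^ (-p-1)) x := by
      have h := ((hasDerivAt_id x).const_sub m).rpow_const (p := -p) (Or.inl (ne_of_gt hmx))
      simp only [id_eq] at h
      convert h using 1
      ring
    have d2 : HasDerivAt (fun x : ℝ => (m+x) ^ (-p)) (-p * (m+x) ^ (-p-1)) x := by
      have h := ((hasDerivAt_id x).const_add m).rpow_const (p := -p) (Or.inl (ne_of_gt hpx))
      simp only [id_eq] at h
      convert h using 1
      ring
    have d3 : HasDerivAt (fun x : ℝ => 2*p*m^(-(p+1))*x) (2*p*m^(-(p+1))) x := by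
      simpa using (hasDerivAt_id x).const_mul (2*p*m^(-(p+1)))
    have := (d1.sub d2).sub d3
    exact this.congr_deriv (by ring)
  have hmono : MonotoneOn ψ (Icc (0:ℝ) 1) := by
    apply monotoneOn_of_deriv_nonneg (convex_Icc 0 1)
    · intro x hx
      exact (hder x hx).continuousAt.continuousWithinAt
    · intro x hx
      rw [interior_Icc] at hx
      exact ((hder x (Ioo_subset_Icc_self hx)).differentiableAt).differentiableWithinAt
    · intro x hx
      rw [interior_Icc] at hx
      rw [(hder x (Ioo_subset_Icc_self hx)).deriv]
      obtain ⟨hx0, hx1⟩ := hx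
      have hmx : (0:ℝ) < m - x := by linarith
      have hpx : (0:ℝ) < m + x := by linarith
      have hAB : (m-x)*(m+x) ≤ m^2 := by nlinarith
      have key := amgm hmx hpx hm0 (by linarith : (0:ℝ) ≤ p + 1) hAB
      have e1 : (m-x) ^ (-(p+1)) = (m-x) ^ (-p-1) := by ring_nf
      have e2 : (m+x) ^ (-(p+1)) = (m+x) ^ (-p-1) := by ring_nf
      rw [e1, e2] at key
      nlinarith [key, hp]
  have h01 : (0:ℝ) ∈ Icc (0:ℝ) 1 := by constructor <;> norm_num
  have h11 : (1:ℝ) ∈ Icc (0:ℝ) 1 := by constructor <;> norm_num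
  have := hmono h01 h11 (by norm_num)
  have hψ0 : ψ 0 = 0 := by simp [hψ]
  have hψ1 : ψ 1 = (m-1) ^ (-p) - (m+1) ^ (-p) - 2*p*m^(-(p+1)) := by simp [hψ]
  rw [hψ0, hψ1] at this
  linarith


lemma exp_neg_lt_one {v : ℝ} (hv : 0 < v) : Real.exp (-v) < 1 := by
  have : Real.exp (-v) < Real.exp 0 := Real.exp_lt_exp.2 (by linarith)
  simpa using this

lemma fn_eq {α : ℝ} (n : ℕ) {t : ℝ} :
    2*(t ^ α * Real.exp (-(((2*(n:ℝ)+1)*α)*t))/(1+t^2))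
      = (2*(t ^ α/(1+t^2))*Real.exp (-(α*t))) * (Real.exp (-(2*(α*t))))^n := by
  rw [show -(((2*(n:ℝ)+1)*α)*t) = -(α*t) + (n:ℝ)*(-(2*(α*t))) by ring,
    Real.exp_add, Real.exp_nat_mul]
  ring

lemma summable_fn {α t : ℝ} (hα0 : 0 < α) (ht0 : 0 < t) :
    Summable (fun n : ℕ => 2*(t ^ α * Real.exp (-(((2*(n:ℝ)+1)*α)*t))/(1+t^2))) := by
  have hu : 0 < α * t := mul_pos hα0 ht0
  have hr0 : (0:ℝ) ≤ Real.exp (-(2*(α*t))) := (Real.exp_pos _).le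
  have hr1 : Real.exp (-(2*(α*t))) < 1 := exp_neg_lt_one (by linarith)
  have hgeo : Summable (fun n : ℕ => (Real.exp (-(2*(α*t))))^n) :=
    summable_geometric_of_lt_one hr0 hr1
  have := hgeo.mul_left (2*(t ^ α/(1+t^2))*Real.exp (-(α*t)))
  apply this.congr
  intro n
  rw [fn_eq]

lemma tsum_fn {α t : ℝ} (hα0 : 0 < α) (ht0 : 0 < t) :
    t ^ α / (Real.sinh (α*t)*(1+t^2))
      = ∑' n : ℕ, 2*(t ^ α * Real.exp (-(((2*(n:ℝ)+1)*α)*t))/(1+t^2)) := by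
  have hu : 0 < α * t := mul_pos hα0 ht0
  have hs : 0 < Real.sinh (α*t) := Real.sinh_pos_iff.mpr hu
  have hr0 : (0:ℝ) ≤ Real.exp (-(2*(α*t))) := (Real.exp_pos _).le
  have hr1 : Real.exp (-(2*(α*t))) < 1 := exp_neg_lt_one (by linarith)
  have h1t : (0:ℝ) < 1 + t^2 := by positivity
  have hre : (0:ℝ) < 1 - Real.exp (-(2*(α*t))) := by linarith
  have hstep : ∀ n : ℕ, 2*(t ^ α * Real.exp (-(((2*(n:ℝ)+1)*α)*t))/(1+t^2))
      = (2*(t ^ α/(1+t^2))*Real.exp (-(α*t))) * (Real.exp (-(2*(α*t))))^n :=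
    fun n => fn_eq n
  rw [tsum_congr hstep, tsum_mul_left, tsum_geometric_of_lt_one hr0 hr1]
  have hsinh : Real.sinh (α*t) * (2*Real.exp (-(α*t))) = 1 - Real.exp (-(2*(α*t))) := by
    rw [Real.sinh_eq, show -(2*(α*t)) = -(α*t) + -(α*t) by ring, Real.exp_add]
    have h1 : Real.exp (-(α*t)) * Real.exp (α*t) = 1 := by rw [← Real.exp_add]; simp
    nlinarith [h1]
  have hexp0 : (0:ℝ) < Real.exp (-(α*t)) := Real.exp_pos _
  have hEne : Real.exp (-(α*t)) ≠ 0 := ne_of_gt hexp0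
  have hsne : Real.sinh (α*t) ≠ 0 := ne_of_gt hs
  have h1tne : (1+t^2) ≠ 0 := ne_of_gt h1t
  calc t ^ α / (Real.sinh (α*t)*(1+t^2))
      = 2*(t ^ α/(1+t^2))*Real.exp (-(α*t)) * (Real.sinh (α*t) * (2*Real.exp (-(α*t))))⁻¹ := by
        field_simp
    _ = 2*(t ^ α/(1+t^2))*Real.exp (-(α*t)) * (1 - Real.exp (-(2*(α*t))))⁻¹ := by
        rw [hsinh]

set_option maxHeartbeats 1000000 in
lemma F0_le {α : ℝ} (hα : 2 < α) :
    Ffun α α ≤ (2 + 2 ^ ((2:ℝ)-α)/(α-2)) * Gfun α α := by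
  have hα0 : (0:ℝ) < α := by linarith
  have hα1 : (1:ℝ) ≤ α := by linarith
  have hp : (0:ℝ) < α - 2 := by linarith
  have hG0 : 0 ≤ Gfun α α := G_nonneg α α
  have hcoe : (0:ℝ) < 2 ^ ((2:ℝ)-α) := Real.rpow_pos_of_pos (by norm_num) _
  set f : ℕ → ℝ → ℝ := fun n t => 2*(t ^ α * Real.exp (-(((2*(n:ℝ)+1)*α)*t))/(1+t^2)) with hf
  have hfmeas : ∀ n, Measurable (f n) := by
    intro n
    exact (meas_G hα0.le ((2*(n:ℝ)+1)*α)).const_mul 2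
  have hk1 : ∀ n : ℕ, (1:ℝ) ≤ (2*(n:ℝ)+1) := by
    intro n
    have : (0:ℝ) ≤ (n:ℝ) := Nat.cast_nonneg n
    linarith
  have hfint : ∀ n, IntegrableOn (f n) (Ioi (0:ℝ)) := by
    intro n
    apply (integrable_G hα0 _).const_mul
    nlinarith [hk1 n]
  have hfnn : ∀ n, ∀ t : ℝ, t ∈ Ioi (0:ℝ) → 0 ≤ f n t := by
    intro n t ht
    have ht0 : (0:ℝ) < t := ht
    simp only [hf]
    positivity
  have hFint := integrable_F (β := α) (x := α) hα1 hα1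
  have hFnn : 0 ≤ᵐ[volume.restrict (Ioi (0:ℝ))]
      fun t : ℝ => t ^ α / (Real.sinh (α*t)*(1+t^2)) := by
    filter_upwards [self_mem_ae_restrict measurableSet_Ioi] with t ht
    have ht0 : (0:ℝ) < t := ht
    have := Real.sinh_pos_iff.mpr (mul_pos hα0 ht0)
    positivity
  have key : ENNReal.ofReal (Ffun α α)
      ≤ ENNReal.ofReal ((2 + 2 ^ ((2:ℝ)-α)/(α-2)) * Gfun α α) := by
    have e0 : ENNReal.ofReal (Ffun α α)
        = ∫⁻ t in Ioi (0:ℝ), ENNReal.ofReal (t ^ α / (Real.sinh (α*t)*(1+t^2))) := by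
      rw [Ffun]
      exact MeasureTheory.ofReal_integral_eq_lintegral_ofReal hFint hFnn
    have e1 : (∫⁻ t in Ioi (0:ℝ), ENNReal.ofReal (t ^ α / (Real.sinh (α*t)*(1+t^2))))
        = ∑' n : ℕ, ∫⁻ t in Ioi (0:ℝ), ENNReal.ofReal (f n t) := by
      rw [← MeasureTheory.lintegral_tsum
        (fun n => ((hfmeas n).ennreal_ofReal).aemeasurable)]
      apply lintegral_congr_ae
      filter_upwards [self_mem_ae_restrict measurableSet_Ioi] with t ht
      have ht0 : (0:ℝ) < t := ht
      rw [tsum_fn hα0 ht0]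
      exact ENNReal.ofReal_tsum_of_nonneg (fun n => hfnn n t ht) (summable_fn hα0 ht0)
    have e2 : ∀ n, (∫⁻ t in Ioi (0:ℝ), ENNReal.ofReal (f n t))
        = ENNReal.ofReal (∫ t in Ioi (0:ℝ), f n t) := by
      intro n
      rw [MeasureTheory.ofReal_integral_eq_lintegral_ofReal (hfint n) _]
      filter_upwards [self_mem_ae_restrict measurableSet_Ioi] with t ht
      exact hfnn n t ht
    have h0 : (∫ t in Ioi (0:ℝ), f 0 t) = 2 * Gfun α α := by
      rw [Gfun, ← MeasureTheory.integral_const_mul]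
      apply MeasureTheory.integral_congr_ae (ae_of_all _ _)
      intro t
      simp only [hf, Nat.cast_zero]
      norm_num
    have htail : ∀ i : ℕ, (∫ t in Ioi (0:ℝ), f (i+1) t)
        ≤ 2*((2*(i:ℝ)+3) ^ ((1:ℝ)-α)) * Gfun α α := by
      intro i
      have hk : (1:ℝ) ≤ 2*(i:ℝ)+3 := by
        have : (0:ℝ) ≤ (i:ℝ) := Nat.cast_nonneg i
        linarith
      have hHle := H_le hα hk
      have hshape : (∫ t in Ioi (0:ℝ), f (i+1) t)
          = 2 * ∫ t in Ioi (0:ℝ), t ^ α * Real.exp (-(((2*(i:ℝ)+3)*α)*t)) / (1 + t ^ 2) := by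
        rw [← MeasureTheory.integral_const_mul]
        apply MeasureTheory.integral_congr_ae (ae_of_all _ _)
        intro t
        simp only [hf]
        push_cast
        ring_nf
      rw [hshape]
      calc 2 * ∫ t in Ioi (0:ℝ), t ^ α * Real.exp (-(((2*(i:ℝ)+3)*α)*t)) / (1 + t ^ 2)
          ≤ 2 * ((2*(i:ℝ)+3) ^ ((1:ℝ)-α) * Gfun α α) := by
            apply mul_le_mul_of_nonneg_left hHle (by norm_num)
        _ = 2*((2*(i:ℝ)+3) ^ ((1:ℝ)-α)) * Gfun α α := by ring
    -- telescoping bound on partial sums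
    set v : ℕ → ℝ := fun i => (2*(i:ℝ)+2) ^ ((2:ℝ)-α)/(2*(α-2)) with hv
    have hvnn : ∀ i, 0 ≤ v i := by
      intro i
      have : (0:ℝ) ≤ (i:ℝ) := Nat.cast_nonneg i
      have h2 : (0:ℝ) ≤ (2*(i:ℝ)+2) := by linarith
      simp only [hv]
      positivity
    have htel : ∀ i : ℕ, (2*(i:ℝ)+3) ^ ((1:ℝ)-α) ≤ v i - v (i+1) := by
      intro i
      have hi0 : (0:ℝ) ≤ (i:ℝ) := Nat.cast_nonneg i
      have hm : (3:ℝ) ≤ 2*(i:ℝ)+3 := by linarith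
      have hstar := star hp hm
      rw [show -((α-2)+1) = (1:ℝ)-α by ring] at hstar
      rw [show (2*(i:ℝ)+3) - 1 = 2*(i:ℝ)+2 by ring] at hstar
      rw [show (2*(i:ℝ)+3) + 1 = 2*((i:ℝ)+1)+2 by ring] at hstar
      rw [show -(α-2) = (2:ℝ)-α by ring] at hstar
      simp only [hv]
      push_cast
      rw [div_sub_div_same, le_div_iff₀ (by linarith : (0:ℝ) < 2*(α-2))]
      linarith
    have hpsum : ∀ N : ℕ, (∑ i ∈ Finset.range N, (2*(i:ℝ)+3) ^ ((1:ℝ)-α))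
        ≤ 2 ^ ((2:ℝ)-α)/(2*(α-2)) := by
      intro N
      calc (∑ i ∈ Finset.range N, (2*(i:ℝ)+3) ^ ((1:ℝ)-α))
          ≤ ∑ i ∈ Finset.range N, (v i - v (i+1)) :=
            Finset.sum_le_sum (fun i _ => htel i)
        _ = v 0 - v N := Finset.sum_range_sub' v N
        _ ≤ v 0 := by linarith [hvnn N]
        _ = 2 ^ ((2:ℝ)-α)/(2*(α-2)) := by
            simp only [hv]
            norm_num
    have hbound : (∑' i : ℕ, ENNReal.ofReal (∫ t in Ioi (0:ℝ), f (i+1) t))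
        ≤ ENNReal.ofReal ((2 ^ ((2:ℝ)-α)/(α-2)) * Gfun α α) := by
      apply ENNReal.tsum_le_of_sum_range_le
      intro N
      have hterm_nn : ∀ i : ℕ, 0 ≤ ∫ t in Ioi (0:ℝ), f (i+1) t := by
        intro i
        apply setIntegral_nonneg measurableSet_Ioi
        intro t ht
        exact hfnn (i+1) t ht
      rw [← ENNReal.ofReal_sum_of_nonneg (fun i _ => hterm_nn i)]
      apply ENNReal.ofReal_le_ofReal
      calc (∑ i ∈ Finset.range N, ∫ t in Ioi (0:ℝ), f (i+1) t)
          ≤ ∑ i ∈ Finset.range N, 2*((2*(i:ℝ)+3) ^ ((1:ℝ)-α)) * Gfun α α :=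
            Finset.sum_le_sum (fun i _ => htail i)
        _ = (2 * Gfun α α) * ∑ i ∈ Finset.range N, (2*(i:ℝ)+3) ^ ((1:ℝ)-α) := by
            rw [Finset.mul_sum]
            apply Finset.sum_congr rfl
            intro i _
            ring
        _ ≤ (2 * Gfun α α) * (2 ^ ((2:ℝ)-α)/(2*(α-2))) := by
            apply mul_le_mul_of_nonneg_left (hpsum N) (by linarith)
        _ = (2 ^ ((2:ℝ)-α)/(α-2)) * Gfun α α := by
            field_simp
    calc ENNReal.ofReal (Ffun α α)
        = ∑' n : ℕ, ENNReal.ofReal (∫ t in Ioi (0:ℝ), f n t) := by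
          rw [e0, e1]
          exact tsum_congr e2
      _ = ENNReal.ofReal (∫ t in Ioi (0:ℝ), f 0 t)
            + ∑' i : ℕ, ENNReal.ofReal (∫ t in Ioi (0:ℝ), f (i+1) t) := by
          rw [tsum_eq_zero_add' ENNReal.summable]
      _ ≤ ENNReal.ofReal (2 * Gfun α α)
            + ENNReal.ofReal ((2 ^ ((2:ℝ)-α)/(α-2)) * Gfun α α) := by
          rw [h0]
          exact add_le_add le_rfl hbound
      _ = ENNReal.ofReal (2 * Gfun α α + (2 ^ ((2:ℝ)-α)/(α-2)) * Gfun α α) := by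
          rw [ENNReal.ofReal_add (by positivity) (by positivity)]
      _ = ENNReal.ofReal ((2 + 2 ^ ((2:ℝ)-α)/(α-2)) * Gfun α α) := by
          congr 1
          ring
  have hrhs : 0 ≤ (2 + 2 ^ ((2:ℝ)-α)/(α-2)) * Gfun α α := by positivity
  exact (ENNReal.ofReal_le_ofReal_iff hrhs).mp key


lemma two_alpha_le {α : ℝ} (hα : 2 < α) : 2*α ≤ (2:ℝ)^α := by
  have h1 : (2:ℝ)^α = (2:ℝ)^((2:ℝ)) * (2:ℝ)^(α-2) := by
    rw [← Real.rpow_add (by norm_num : (0:ℝ) < 2)]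
    ring_nf
  have h2 : (2:ℝ)^((2:ℝ)) = 4 := by
    rw [show ((2:ℝ)) = ((2:ℕ):ℝ) by norm_num, Real.rpow_natCast]
    norm_num
  have h3 : (2:ℝ)^(α-2) = Real.exp (Real.log 2 * (α-2)) := by
    rw [Real.rpow_def_of_pos (by norm_num : (0:ℝ) < 2)]
  have h4 := Real.add_one_le_exp (Real.log 2 * (α-2))
  have h5 : (1:ℝ)/2 ≤ Real.log 2 := by
    have := Real.log_two_gt_d9
    linarith
  have h6 : (0:ℝ) ≤ α - 2 := by linarith
  nlinarith [mul_nonneg h6 (by linarith : (0:ℝ) ≤ Real.log 2 - 1/2)]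

lemma coeff_le {α : ℝ} (hα : 2 < α) :
    2 + (2:ℝ)^((2:ℝ)-α)/(α-2)
      ≤ (2 - (2:ℝ)^((2:ℝ)-α))*(1+(2:ℝ)^((1:ℝ)-α)+(2:ℝ)^((2:ℝ)-α)/(α-2)) := by
  have hd : (0:ℝ) < α - 2 := by linarith
  have hX0 : (0:ℝ) < (2:ℝ)^(-α) := Real.rpow_pos_of_pos (by norm_num) _
  have h2two : (2:ℝ)^((2:ℝ)) = 4 := by
    rw [show ((2:ℝ)) = ((2:ℕ):ℝ) by norm_num, Real.rpow_natCast]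
    norm_num
  have h1one : (2:ℝ)^((1:ℝ)) = 2 := Real.rpow_one 2
  have h2a : (2:ℝ)^((2:ℝ)-α) = 4*(2:ℝ)^(-α) := by
    rw [show ((2:ℝ)-α) = (2:ℝ) + (-α) by ring, Real.rpow_add (by norm_num : (0:ℝ) < 2), h2two]
  have h1a : (2:ℝ)^((1:ℝ)-α) = 2*(2:ℝ)^(-α) := by
    rw [show ((1:ℝ)-α) = (1:ℝ) + (-α) by ring, Real.rpow_add (by norm_num : (0:ℝ) < 2), h1one]
  have hXinv : (2:ℝ)^α * (2:ℝ)^(-α) = 1 := by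
    rw [← Real.rpow_add (by norm_num : (0:ℝ) < 2)]
    norm_num
  have hXα : 2*α*(2:ℝ)^(-α) ≤ 1 := by
    have := mul_le_mul_of_nonneg_right (two_alpha_le hα) hX0.le
    rw [hXinv] at this
    linarith
  rw [h2a, h1a, ← sub_nonneg]
  have expand2 : (2 - 4*(2:ℝ)^(-α))*(1+2*(2:ℝ)^(-α)+4*(2:ℝ)^(-α)/(α-2))
      - (2 + 4*(2:ℝ)^(-α)/(α-2)) = 4*(2:ℝ)^(-α)*(1-2*α*(2:ℝ)^(-α))/(α-2) := by
    have hne : α - 2 ≠ 0 := ne_of_gt hd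
    field_simp
    ring
  rw [expand2]
  apply div_nonneg _ hd.le
  apply mul_nonneg (by positivity)
  linarith

end Stmt17

theorem stmt_17 (α : ℝ) (hα : 2 < α) :
    Ffun (α + 1) α - Ffun α α ≥
      (2 - (2 : ℝ) ^ (-(α + 1))) * Gfun (α + 1) α -
        (2 - (2 : ℝ) ^ (2 - α)) *
          (1 + (2 : ℝ) ^ (1 - α) + (2 : ℝ) ^ (2 - α) / (α - 2)) * Gfun α α := by
  have hG1 := Stmt17.G_nonneg (α+1) α
  have hG0 := Stmt17.G_nonneg α α
  have h1 := Stmt17.F1_ge hα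
  have h0 := Stmt17.F0_le hα
  have hc := Stmt17.coeff_le hα
  have hε : (0:ℝ) < (2:ℝ)^(-(α+1)) := Real.rpow_pos_of_pos (by norm_num) _
  rw [ge_iff_le]
  nlinarith [mul_le_mul_of_nonneg_right hc hG0, mul_nonneg hε.le hG1]
end

section
/- There exists a constant α₁ > 0 such that for all α ≥ α₁, G(α+1,α) − (1 + 1/α³) · G(α,α) > 0, where G(β,x) = ∫₀^∞ t^β · e^{−xt} / (1 + t²) dt. -/
open MeasureTheory Filter Real

set_option maxHeartbeats 1000000

lemma intOn {α : ℝ} (hα : 1 ≤ α) {p : ℝ} (hp : -1 < p) :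
    IntegrableOn (fun t : ℝ => t ^ p * Real.exp (-(α * t))) (Set.Ioi 0) := by
  have hp1 : (0:ℝ) < p + 1 := by linarith
  have h0 := Real.GammaIntegral_convergent hp1
  refine Integrable.mono' h0 ?_ ?_
  · apply Measurable.aestronglyMeasurable
    fun_prop
  · rw [ae_restrict_iff' measurableSet_Ioi]
    refine ae_of_all _ fun t ht => ?_
    have ht0 : (0:ℝ) < t := ht
    have h1 : t ^ p * Real.exp (-(α * t)) ≤ Real.exp (-t) * t ^ (p + 1 - 1) := by
      rw [show p + 1 - 1 = p by ring, mul_comm (Real.exp (-t))]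
      have : Real.exp (-(α * t)) ≤ Real.exp (-t) := by
        apply Real.exp_le_exp.2; nlinarith
      exact mul_le_mul_of_nonneg_left this (Real.rpow_nonneg ht0.le p)
    rw [Real.norm_eq_abs, abs_of_nonneg (by positivity)]
    exact h1

lemma intVal {α : ℝ} (hα : 0 < α) {p : ℝ} (hp : -1 < p) :
    ∫ t in Set.Ioi (0:ℝ), t ^ p * Real.exp (-(α * t)) = (1/α) ^ (p+1) * Real.Gamma (p+1) := by
  have hp1 : (0:ℝ) < p + 1 := by linarith
  have := Real.integral_rpow_mul_exp_neg_mul_Ioi hp1 hα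
  simpa [show p + 1 - 1 = p by ring] using this

lemma intG {α : ℝ} (hα : 1 ≤ α) {β : ℝ} (hβ : 0 < β) :
    IntegrableOn (fun t : ℝ => t ^ β * Real.exp (-(α * t)) / (1 + t ^ 2)) (Set.Ioi 0) := by
  refine Integrable.mono' (intOn hα (by linarith : (-1:ℝ) < β)) ?_ ?_
  · apply Measurable.aestronglyMeasurable; fun_prop
  · rw [ae_restrict_iff' measurableSet_Ioi]
    refine ae_of_all _ fun t ht => ?_
    have ht0 : (0:ℝ) < t := ht
    have h2 : (1:ℝ) ≤ 1 + t ^ 2 := by nlinarith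
    rw [Real.norm_eq_abs, abs_of_nonneg (by positivity)]
    rw [div_le_iff₀ (by nlinarith)]
    nlinarith [Real.rpow_nonneg ht0.le β, Real.exp_pos (-(α*t)), mul_nonneg (Real.rpow_nonneg ht0.le β) (Real.exp_pos (-(α*t))).le]

lemma stepB {α : ℝ} (hα : 1 ≤ α) :
    Gfun (α + 1) α - (1 + 1 / α ^ 3) * Gfun α α
      = ∫ t in Set.Ioi (0:ℝ),
          (t ^ α * Real.exp (-(α * t)) * ((t - 1 - 1/α^3) / (1 + t ^ 2))) := by
  have hα0 : (0:ℝ) < α := by linarith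
  unfold Gfun
  rw [← MeasureTheory.integral_const_mul, ← integral_sub (intG hα (by linarith)) ((intG hα hα0).const_mul _)]
  refine setIntegral_congr_fun measurableSet_Ioi fun t ht => ?_
  have ht0 : (0:ℝ) < t := ht
  have h1 : t ^ (α + 1) = t ^ α * t := Real.rpow_add_one (ne_of_gt ht0) α
  have h2 : (0:ℝ) < 1 + t ^ 2 := by nlinarith
  field_simp [h1]
  rw [h1]
  ring

theorem stmt_18 :
    ∃ α₁ : ℝ, 0 < α₁ ∧ ∀ α : ℝ, α₁ ≤ α →
      Gfun (α + 1) α - (1 + 1 / α ^ 3) * Gfun α α > 0 := by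
  refine ⟨50, by norm_num, fun α hα => ?_⟩
  have hα0 : (0:ℝ) < α := by linarith
  have hα1 : (1:ℝ) ≤ α := by linarith
  rw [gt_iff_lt, stepB hα1]
  -- the lower-bound function L
  set c : ℝ := 1 / α ^ 3 with hc
  have hcpos : 0 < c := by positivity
  set L : ℝ → ℝ := fun t =>
    (-11/8 - c) * (t ^ α * Real.exp (-(α * t)))
    + (23/8) * (t ^ (α+1) * Real.exp (-(α * t)))
    + (-41/16) * (t ^ (α+2) * Real.exp (-(α * t)))
    + (7/4) * (t ^ (α+3) * Real.exp (-(α * t)))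
    + (-1) * (t ^ (α+4) * Real.exp (-(α * t)))
    + (3/8) * (t ^ (α+5) * Real.exp (-(α * t)))
    + (-1/16) * (t ^ (α+6) * Real.exp (-(α * t))) with hL
  have i0 := (intOn hα1 (by linarith : (-1:ℝ) < α)).const_mul (-11/8 - c)
  have i1 := (intOn hα1 (by linarith : (-1:ℝ) < α+1)).const_mul (23/8 : ℝ)
  have i2 := (intOn hα1 (by linarith : (-1:ℝ) < α+2)).const_mul (-41/16 : ℝ)
  have i3 := (intOn hα1 (by linarith : (-1:ℝ) < α+3)).const_mul (7/4 : ℝ)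
  have i4 := (intOn hα1 (by linarith : (-1:ℝ) < α+4)).const_mul (-1 : ℝ)
  have i5 := (intOn hα1 (by linarith : (-1:ℝ) < α+5)).const_mul (3/8 : ℝ)
  have i6 := (intOn hα1 (by linarith : (-1:ℝ) < α+6)).const_mul (-1/16 : ℝ)
  have hLint : IntegrableOn L (Set.Ioi 0) :=
    ((((((i0.add i1).add i2).add i3).add i4).add i5).add i6)
  -- the combined integrand is integrable
  have hcomb : IntegrableOn
      (fun t : ℝ => t ^ α * Real.exp (-(α * t)) * ((t - 1 - c) / (1 + t ^ 2)))
      (Set.Ioi 0) := by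
    have e1 : Set.EqOn
        (fun t : ℝ => t ^ (α+1) * Real.exp (-(α * t)) / (1 + t ^ 2)
          - (1 + c) * (t ^ α * Real.exp (-(α * t)) / (1 + t ^ 2)))
        (fun t : ℝ => t ^ α * Real.exp (-(α * t)) * ((t - 1 - c) / (1 + t ^ 2)))
        (Set.Ioi 0) := by
      intro t ht
      have ht0 : (0:ℝ) < t := ht
      have h1 : t ^ (α + 1) = t ^ α * t := Real.rpow_add_one (ne_of_gt ht0) α
      have h2 : (0:ℝ) < 1 + t ^ 2 := by nlinarith
      simp only [h1]
      field_simp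
      ring
    exact MeasureTheory.IntegrableOn.congr_fun
      ((intG hα1 (by linarith : (0:ℝ) < α+1)).sub
        ((intG hα1 hα0).const_mul (1+c))) e1 measurableSet_Ioi
  -- pointwise bound : L ≤ combined on Ioi 0
  have hle : ∀ t ∈ Set.Ioi (0:ℝ),
      L t ≤ t ^ α * Real.exp (-(α * t)) * ((t - 1 - c) / (1 + t ^ 2)) := by
    intro t ht
    have ht0 : (0:ℝ) < t := ht
    have hw : (0:ℝ) < t ^ α * Real.exp (-(α * t)) := by positivity
    have h2 : (0:ℝ) < 1 + t ^ 2 := by nlinarith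
    have hp : ∀ k : ℕ, t ^ (α + (k:ℝ)) = t ^ α * t ^ k := fun k => by
      rw [Real.rpow_add ht0, Real.rpow_natCast]
    have e1 : t ^ (α+1) = t ^ α * t ^ (1:ℕ) := by have := hp 1; push_cast at this; exact this
    have e2 : t ^ (α+2) = t ^ α * t ^ (2:ℕ) := by have := hp 2; push_cast at this; exact this
    have e3 : t ^ (α+3) = t ^ α * t ^ (3:ℕ) := by have := hp 3; push_cast at this; exact this
    have e4 : t ^ (α+4) = t ^ α * t ^ (4:ℕ) := by have := hp 4; push_cast at this; exact this
    have e5 : t ^ (α+5) = t ^ α * t ^ (5:ℕ) := by have := hp 5; push_cast at this; exact this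
    have e6 : t ^ (α+6) = t ^ α * t ^ (6:ℕ) := by have := hp 6; push_cast at this; exact this
    have key : (-11/8 - c) + (23/8)*t + (-41/16)*t^2 + (7/4)*t^3 + (-1)*t^4
        + (3/8)*t^5 + (-1/16)*t^6 ≤ (t - 1 - c) / (1 + t ^ 2) := by
      rw [le_div_iff₀ h2]
      nlinarith [mul_nonneg (pow_nonneg (sq_nonneg (t-1)) 2) (sq_nonneg (t^2 - t)),
        mul_nonneg (pow_nonneg (sq_nonneg (t-1)) 2) (sq_nonneg (t - 3/2)),
        pow_nonneg (sq_nonneg (t-1)) 2,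
        mul_nonneg (sq_nonneg t) hcpos.le]
    calc L t = (t ^ α * Real.exp (-(α * t))) *
          ((-11/8 - c) + (23/8)*t + (-41/16)*t^2 + (7/4)*t^3 + (-1)*t^4
            + (3/8)*t^5 + (-1/16)*t^6) := by
            simp only [hL, e1, e2, e3, e4, e5, e6]; ring
      _ ≤ _ := mul_le_mul_of_nonneg_left key hw.le
  have hmono := setIntegral_mono_on hLint hcomb measurableSet_Ioi hle
  refine lt_of_lt_of_le ?_ hmono
  -- compute ∫ L
  have hInt : ∫ t in Set.Ioi (0:ℝ), L t
      = (-11/8 - c) * ((1/α) ^ (α+1) * Real.Gamma (α+1))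
      + (23/8) * ((1/α) ^ (α+1+1) * Real.Gamma (α+1+1))
      + (-41/16) * ((1/α) ^ (α+2+1) * Real.Gamma (α+2+1))
      + (7/4) * ((1/α) ^ (α+3+1) * Real.Gamma (α+3+1))
      + (-1) * ((1/α) ^ (α+4+1) * Real.Gamma (α+4+1))
      + (3/8) * ((1/α) ^ (α+5+1) * Real.Gamma (α+5+1))
      + (-1/16) * ((1/α) ^ (α+6+1) * Real.Gamma (α+6+1)) := by
    simp only [hL]
    have I2 : Integrable (fun x : ℝ => (-11/8 - c) * (x ^ α * Real.exp (-(α * x))) + (23/8) * (x ^ (α+1) * Real.exp (-(α * x)))) (volume.restrict (Set.Ioi 0)) := i0.add i1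
    have I3 : Integrable (fun x : ℝ => (-11/8 - c) * (x ^ α * Real.exp (-(α * x))) + (23/8) * (x ^ (α+1) * Real.exp (-(α * x))) + (-41/16) * (x ^ (α+2) * Real.exp (-(α * x)))) (volume.restrict (Set.Ioi 0)) := I2.add i2
    have I4 : Integrable (fun x : ℝ => (-11/8 - c) * (x ^ α * Real.exp (-(α * x))) + (23/8) * (x ^ (α+1) * Real.exp (-(α * x))) + (-41/16) * (x ^ (α+2) * Real.exp (-(α * x))) + (7/4) * (x ^ (α+3) * Real.exp (-(α * x)))) (volume.restrict (Set.Ioi 0)) := I3.add i3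
    have I5 : Integrable (fun x : ℝ => (-11/8 - c) * (x ^ α * Real.exp (-(α * x))) + (23/8) * (x ^ (α+1) * Real.exp (-(α * x))) + (-41/16) * (x ^ (α+2) * Real.exp (-(α * x))) + (7/4) * (x ^ (α+3) * Real.exp (-(α * x))) + (-1) * (x ^ (α+4) * Real.exp (-(α * x)))) (volume.restrict (Set.Ioi 0)) := I4.add i4
    have I6 : Integrable (fun x : ℝ => (-11/8 - c) * (x ^ α * Real.exp (-(α * x))) + (23/8) * (x ^ (α+1) * Real.exp (-(α * x))) + (-41/16) * (x ^ (α+2) * Real.exp (-(α * x))) + (7/4) * (x ^ (α+3) * Real.exp (-(α * x))) + (-1) * (x ^ (α+4) * Real.exp (-(α * x))) + (3/8) * (x ^ (α+5) * Real.exp (-(α * x)))) (volume.restrict (Set.Ioi 0)) := I5.add i5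
    have I7 : Integrable (fun x : ℝ => (-11/8 - c) * (x ^ α * Real.exp (-(α * x))) + (23/8) * (x ^ (α+1) * Real.exp (-(α * x))) + (-41/16) * (x ^ (α+2) * Real.exp (-(α * x))) + (7/4) * (x ^ (α+3) * Real.exp (-(α * x))) + (-1) * (x ^ (α+4) * Real.exp (-(α * x))) + (3/8) * (x ^ (α+5) * Real.exp (-(α * x))) + (-1/16) * (x ^ (α+6) * Real.exp (-(α * x)))) (volume.restrict (Set.Ioi 0)) := I6.add i6
    rw [integral_add I6 i6, integral_add I5 i5, integral_add I4 i4,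
        integral_add I3 i3, integral_add I2 i2, integral_add i0 i1]
    simp only [MeasureTheory.integral_const_mul]
    rw [intVal hα0 (by linarith : (-1:ℝ) < α),
        intVal hα0 (by linarith : (-1:ℝ) < α+1),
        intVal hα0 (by linarith : (-1:ℝ) < α+2),
        intVal hα0 (by linarith : (-1:ℝ) < α+3),
        intVal hα0 (by linarith : (-1:ℝ) < α+4),
        intVal hα0 (by linarith : (-1:ℝ) < α+5),
        intVal hα0 (by linarith : (-1:ℝ) < α+6)]
  rw [hInt]
  -- reduce Gamma's and rpow's to base values
  have hg : ∀ x : ℝ, 0 < x → Real.Gamma (x+1) = x * Real.Gamma x :=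
    fun x hx => Real.Gamma_add_one (ne_of_gt hx)
  have hr : ∀ y : ℝ, (1/α:ℝ) ^ (y+1) = (1/α) ^ y * (1/α) :=
    fun y => Real.rpow_add_one (by positivity) y
  have hg1 : Real.Gamma (α+1+1) = (α+1) * Real.Gamma (α+1) := hg _ (by linarith)
  have hg2 : Real.Gamma (α+2+1) = (α+2) * ((α+1) * Real.Gamma (α+1)) := by
    rw [hg _ (by linarith : (0:ℝ) < α+2), show α+(2:ℝ) = α+1+1 by ring, hg1]
  have hg3 : Real.Gamma (α+3+1) = (α+3) * ((α+2) * ((α+1) * Real.Gamma (α+1))) := by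
    rw [hg _ (by linarith : (0:ℝ) < α+3), show α+(3:ℝ) = α+2+1 by ring, hg2]
  have hg4 : Real.Gamma (α+4+1) = (α+4) * ((α+3) * ((α+2) * ((α+1) * Real.Gamma (α+1)))) := by
    rw [hg _ (by linarith : (0:ℝ) < α+4), show α+(4:ℝ) = α+3+1 by ring, hg3]
  have hg5 : Real.Gamma (α+5+1)
      = (α+5) * ((α+4) * ((α+3) * ((α+2) * ((α+1) * Real.Gamma (α+1))))) := by
    rw [hg _ (by linarith : (0:ℝ) < α+5), show α+(5:ℝ) = α+4+1 by ring, hg4]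
  have hg6 : Real.Gamma (α+6+1)
      = (α+6) * ((α+5) * ((α+4) * ((α+3) * ((α+2) * ((α+1) * Real.Gamma (α+1)))))) := by
    rw [hg _ (by linarith : (0:ℝ) < α+6), show α+(6:ℝ) = α+5+1 by ring, hg5]
  have hr1 : (1/α:ℝ) ^ (α+1+1) = (1/α) ^ (α+1) * (1/α) := hr _
  have hr2 : (1/α:ℝ) ^ (α+2+1) = (1/α) ^ (α+1) * (1/α) * (1/α) := by
    rw [show α+(2:ℝ)+1 = (α+1+1)+1 by ring, hr _, hr1]
  have hr3 : (1/α:ℝ) ^ (α+3+1) = (1/α) ^ (α+1) * (1/α) * (1/α) * (1/α) := by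
    rw [show α+(3:ℝ)+1 = (α+2+1)+1 by ring, hr _, hr2]
  have hr4 : (1/α:ℝ) ^ (α+4+1) = (1/α) ^ (α+1) * (1/α) * (1/α) * (1/α) * (1/α) := by
    rw [show α+(4:ℝ)+1 = (α+3+1)+1 by ring, hr _, hr3]
  have hr5 : (1/α:ℝ) ^ (α+5+1)
      = (1/α) ^ (α+1) * (1/α) * (1/α) * (1/α) * (1/α) * (1/α) := by
    rw [show α+(5:ℝ)+1 = (α+4+1)+1 by ring, hr _, hr4]
  have hr6 : (1/α:ℝ) ^ (α+6+1)
      = (1/α) ^ (α+1) * (1/α) * (1/α) * (1/α) * (1/α) * (1/α) * (1/α) := by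
    rw [show α+(6:ℝ)+1 = (α+5+1)+1 by ring, hr _, hr5]
  rw [hg1, hg2, hg3, hg4, hg5, hg6, hr1, hr2, hr3, hr4, hr5, hr6]
  set P : ℝ := (1/α) ^ (α+1) with hPdef
  set g : ℝ := Real.Gamma (α+1) with hgdef
  have hPpos : 0 < P := Real.rpow_pos_of_pos (by positivity) _
  have hgpos : 0 < g := Real.Gamma_pos_of_pos (by linarith)
  have hS : (0:ℝ) < (1/16)*α^4 - (33/16)*α^3 - (91/4)*α^2 - (261/4)*α - 45 := by
    nlinarith [sq_nonneg (α - 50), sq_nonneg α, mul_nonneg (sub_nonneg.2 hα) (sq_nonneg α)]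
  have hEq : (-11/8 - c) * (P * g)
      + (23/8) * (P * (1/α) * ((α+1) * g))
      + (-41/16) * (P * (1/α) * (1/α) * ((α+2) * ((α+1) * g)))
      + (7/4) * (P * (1/α) * (1/α) * (1/α) * ((α+3) * ((α+2) * ((α+1) * g))))
      + (-1) * (P * (1/α) * (1/α) * (1/α) * (1/α)
            * ((α+4) * ((α+3) * ((α+2) * ((α+1) * g)))))
      + (3/8) * (P * (1/α) * (1/α) * (1/α) * (1/α) * (1/α)
            * ((α+5) * ((α+4) * ((α+3) * ((α+2) * ((α+1) * g))))))
      + (-1/16) * (P * (1/α) * (1/α) * (1/α) * (1/α) * (1/α) * (1/α)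
            * ((α+6) * ((α+5) * ((α+4) * ((α+3) * ((α+2) * ((α+1) * g)))))))
      = P * g * (((1/16)*α^4 - (33/16)*α^3 - (91/4)*α^2 - (261/4)*α - 45) / α^6) := by
    rw [hc]
    field_simp
    ring
  rw [hEq]
  positivity
end

section
/- As α → ∞, H₁(α, α + 3π/2) = H₁(α,α) · (1 + o(1)); that is, lim_{α→∞} H₁(α, α + 3π/2) / H₁(α,α) = 1, where H₁(α,x) = ∫₀^∞ (t^α / sinh t) · x/(x² + t²) dt. -/
open MeasureTheory Filter Real

/-- `H₁(α,x) = ∫₀^∞ (t^α / sinh t) · x/(x²+t²) dt`. -/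
noncomputable def H1fun (α x : ℝ) : ℝ :=
  ∫ t in Set.Ioi (0:ℝ), t ^ α / Real.sinh t * (x / (x ^ 2 + t ^ 2))

lemma sinh_lower {t : ℝ} (ht : 0 < t) : t * Real.exp t / (1 + 2 * t) ≤ Real.sinh t := by
  rw [div_le_iff₀ (by linarith), Real.sinh_eq]
  have h1 : 1 + 2 * t ≤ Real.exp (2 * t) := by
    have := Real.add_one_le_exp (2 * t); linarith
  have h2 : Real.exp (2 * t) = Real.exp t * Real.exp t := by
    rw [two_mul, Real.exp_add]
  have h3 : Real.exp (-t) * Real.exp t = 1 := by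
    rw [← Real.exp_add]; simp
  have h4 : (0:ℝ) < Real.exp t := Real.exp_pos t
  have h5 : (0:ℝ) < Real.exp (-t) := Real.exp_pos (-t)
  nlinarith [mul_pos h5 ht]

lemma contOn_H1 (α x : ℝ) (hx : 0 < x) :
    ContinuousOn (fun t : ℝ => t ^ α / Real.sinh t * (x / (x ^ 2 + t ^ 2))) (Set.Ioi 0) := by
  apply ContinuousOn.mul
  · apply ContinuousOn.div
    · exact fun t ht => (Real.continuousAt_rpow_const t α (Or.inl (ne_of_gt ht))).continuousWithinAt
    · exact Real.continuous_sinh.continuousOn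
    · intro t ht
      exact ne_of_gt (Real.sinh_pos_iff.mpr ht)
  · apply ContinuousOn.div continuousOn_const
    · exact (continuous_const.add (continuous_id.pow 2)).continuousOn
    · intro t ht
      positivity

lemma integrableOn_H1 {α x : ℝ} (hα : 0 < α) (hx : 0 < x) :
    IntegrableOn (fun t : ℝ => t ^ α / Real.sinh t * (x / (x ^ 2 + t ^ 2))) (Set.Ioi 0) := by
  have hg1 := Real.GammaIntegral_convergent hα
  have hg2 := Real.GammaIntegral_convergent (show (0:ℝ) < α + 1 by linarith)
  have hg : IntegrableOn
      (fun t : ℝ => (Real.exp (-t) * t ^ (α - 1) + 2 * (Real.exp (-t) * t ^ (α + 1 - 1))) / x)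
      (Set.Ioi 0) := (hg1.add (hg2.const_mul 2)).div_const x
  refine hg.mono' ((contOn_H1 α x hx).aestronglyMeasurable measurableSet_Ioi) ?_
  filter_upwards [ae_restrict_mem measurableSet_Ioi] with t ht
  have ht' : (0:ℝ) < t := ht
  have hs : 0 < Real.sinh t := Real.sinh_pos_iff.mpr ht'
  have htp : (0:ℝ) < t ^ α := Real.rpow_pos_of_pos ht' α
  have hd : (0:ℝ) < x ^ 2 + t ^ 2 := by positivity
  have hfnn : 0 ≤ t ^ α / Real.sinh t * (x / (x ^ 2 + t ^ 2)) := by positivity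
  rw [Real.norm_of_nonneg hfnn]
  -- bound the sinh factor
  have hL : (0:ℝ) < t * Real.exp t / (1 + 2 * t) := by positivity
  have key : t ^ α / Real.sinh t ≤ Real.exp (-t) * t ^ (α - 1) + 2 * (Real.exp (-t) * t ^ (α + 1 - 1)) := by
    have h1 : t ^ α / Real.sinh t ≤ t ^ α / (t * Real.exp t / (1 + 2 * t)) :=
      div_le_div_of_nonneg_left htp.le hL (sinh_lower ht')
    refine h1.trans_eq ?_
    have hrw : t ^ (α - 1) = t ^ α / t := by
      rw [Real.rpow_sub ht', Real.rpow_one]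
    have hrw2 : t ^ (α + 1 - 1) = t ^ α := by norm_num
    rw [hrw, hrw2, Real.exp_neg]
    have hexp : (0:ℝ) < Real.exp t := Real.exp_pos t
    field_simp
  have kern : x / (x ^ 2 + t ^ 2) ≤ 1 / x := by
    rw [div_le_div_iff₀ hd hx]
    nlinarith
  calc t ^ α / Real.sinh t * (x / (x ^ 2 + t ^ 2))
      ≤ (Real.exp (-t) * t ^ (α - 1) + 2 * (Real.exp (-t) * t ^ (α + 1 - 1))) * (1 / x) := by
        apply mul_le_mul key kern (by positivity) (by positivity)
    _ = (Real.exp (-t) * t ^ (α - 1) + 2 * (Real.exp (-t) * t ^ (α + 1 - 1))) / x := by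
        rw [mul_one_div]

lemma H1_pos {α x : ℝ} (hα : 0 < α) (hx : 0 < x) : 0 < H1fun α x := by
  rw [H1fun]
  have hint := integrableOn_H1 hα hx
  have hnn : 0 ≤ᵐ[volume.restrict (Set.Ioi (0:ℝ))]
      fun t : ℝ => t ^ α / Real.sinh t * (x / (x ^ 2 + t ^ 2)) := by
    filter_upwards [ae_restrict_mem measurableSet_Ioi] with t ht
    have ht' : (0:ℝ) < t := ht
    have hs : 0 < Real.sinh t := Real.sinh_pos_iff.mpr ht'
    positivity
  rw [setIntegral_pos_iff_support_of_nonneg_ae hnn hint]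
  have hsub : Set.Ioi (0:ℝ) ⊆
      Function.support (fun t : ℝ => t ^ α / Real.sinh t * (x / (x ^ 2 + t ^ 2))) ∩ Set.Ioi 0 := by
    intro t ht
    have ht' : (0:ℝ) < t := ht
    have hs : 0 < Real.sinh t := Real.sinh_pos_iff.mpr ht'
    refine ⟨?_, ht⟩
    have : 0 < t ^ α / Real.sinh t * (x / (x ^ 2 + t ^ 2)) := by positivity
    exact ne_of_gt this
  calc (0:ENNReal) < volume (Set.Ioi (0:ℝ)) := by simp
    _ ≤ _ := measure_mono hsub

lemma pointwise_lower {α x y t : ℝ} (hx : 0 < x) (hxy : x ≤ y) (ht : 0 < t) (hα : 0 < α) :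
    x / y * (t ^ α / Real.sinh t * (x / (x ^ 2 + t ^ 2))) ≤
      t ^ α / Real.sinh t * (y / (y ^ 2 + t ^ 2)) := by
  have hy : 0 < y := lt_of_lt_of_le hx hxy
  have hs : 0 < Real.sinh t := Real.sinh_pos_iff.mpr ht
  have hA : 0 ≤ t ^ α / Real.sinh t := by positivity
  have hk : x / y * (x / (x ^ 2 + t ^ 2)) ≤ y / (y ^ 2 + t ^ 2) := by
    rw [div_mul_div_comm, div_le_div_iff₀ (by positivity) (by positivity)]
    nlinarith [mul_nonneg (sub_nonneg.mpr (mul_le_mul hxy hxy hx.le hy.le)) (sq_nonneg t)]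
  calc x / y * (t ^ α / Real.sinh t * (x / (x ^ 2 + t ^ 2)))
      = t ^ α / Real.sinh t * (x / y * (x / (x ^ 2 + t ^ 2))) := by ring
    _ ≤ t ^ α / Real.sinh t * (y / (y ^ 2 + t ^ 2)) := mul_le_mul_of_nonneg_left hk hA

lemma pointwise_upper {α x y t : ℝ} (hx : 0 < x) (hxy : x ≤ y) (ht : 0 < t) (hα : 0 < α) :
    t ^ α / Real.sinh t * (y / (y ^ 2 + t ^ 2)) ≤
      y / x * (t ^ α / Real.sinh t * (x / (x ^ 2 + t ^ 2))) := by
  have hy : 0 < y := lt_of_lt_of_le hx hxy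
  have hs : 0 < Real.sinh t := Real.sinh_pos_iff.mpr ht
  have hA : 0 ≤ t ^ α / Real.sinh t := by positivity
  have hk : y / (y ^ 2 + t ^ 2) ≤ y / x * (x / (x ^ 2 + t ^ 2)) := by
    rw [div_mul_div_comm, div_le_div_iff₀ (by positivity) (by positivity)]
    nlinarith [mul_nonneg (mul_nonneg hy.le hx.le) (sub_nonneg.mpr (mul_le_mul hxy hxy hx.le hy.le))]
  calc t ^ α / Real.sinh t * (y / (y ^ 2 + t ^ 2))
      ≤ t ^ α / Real.sinh t * (y / x * (x / (x ^ 2 + t ^ 2))) := mul_le_mul_of_nonneg_left hk hA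
    _ = y / x * (t ^ α / Real.sinh t * (x / (x ^ 2 + t ^ 2))) := by ring

lemma H1_lower {α x y : ℝ} (hα : 0 < α) (hx : 0 < x) (hxy : x ≤ y) :
    x / y * H1fun α x ≤ H1fun α y := by
  have hy : 0 < y := lt_of_lt_of_le hx hxy
  have hix := integrableOn_H1 hα hx
  have hiy := integrableOn_H1 hα hy
  rw [H1fun, H1fun, ← MeasureTheory.integral_const_mul]
  exact setIntegral_mono_on (hix.const_mul _) hiy measurableSet_Ioi
    (fun t ht => pointwise_lower hx hxy ht hα)

lemma H1_upper {α x y : ℝ} (hα : 0 < α) (hx : 0 < x) (hxy : x ≤ y) :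
    H1fun α y ≤ y / x * H1fun α x := by
  have hy : 0 < y := lt_of_lt_of_le hx hxy
  have hix := integrableOn_H1 hα hx
  have hiy := integrableOn_H1 hα hy
  rw [H1fun, H1fun, ← MeasureTheory.integral_const_mul]
  exact setIntegral_mono_on hiy (hix.const_mul _) measurableSet_Ioi
    (fun t ht => pointwise_upper hx hxy ht hα)

theorem stmt_19 :
    Tendsto (fun α : ℝ => H1fun α (α + 3 * Real.pi / 2) / H1fun α α)
      atTop (nhds 1) := by
  set c : ℝ := 3 * Real.pi / 2 with hc
  have hcpos : 0 < c := by
    have := Real.pi_pos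
    positivity
  have hlow : ∀ᶠ α : ℝ in atTop, α / (α + c) ≤ H1fun α (α + c) / H1fun α α := by
    filter_upwards [eventually_gt_atTop (0:ℝ)] with α hα
    have hxy : α ≤ α + c := by linarith
    have hpos := H1_pos hα hα
    rw [le_div_iff₀ hpos]
    calc α / (α + c) * H1fun α α ≤ H1fun α (α + c) := H1_lower hα hα hxy
      _ = _ := rfl
  have hup : ∀ᶠ α : ℝ in atTop, H1fun α (α + c) / H1fun α α ≤ (α + c) / α := by
    filter_upwards [eventually_gt_atTop (0:ℝ)] with α hα
    have hxy : α ≤ α + c := by linarith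
    have hpos := H1_pos hα hα
    rw [div_le_iff₀ hpos]
    exact H1_upper hα hα hxy
  have hl : Tendsto (fun α : ℝ => α / (α + c)) atTop (nhds 1) := by
    have h1 : Tendsto (fun α : ℝ => 1 - c / (α + c)) atTop (nhds 1) := by
      have : Tendsto (fun α : ℝ => c / (α + c)) atTop (nhds 0) :=
        tendsto_const_nhds.div_atTop (tendsto_atTop_add_const_right _ c tendsto_id)
      simpa using tendsto_const_nhds.sub this
    refine h1.congr' ?_
    filter_upwards [eventually_gt_atTop (0:ℝ)] with α hα
    have : α + c ≠ 0 := by positivity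
    field_simp
    ring
  have hu : Tendsto (fun α : ℝ => (α + c) / α) atTop (nhds 1) := by
    have h1 : Tendsto (fun α : ℝ => 1 + c / α) atTop (nhds 1) := by
      have : Tendsto (fun α : ℝ => c / α) atTop (nhds 0) :=
        tendsto_const_nhds.div_atTop tendsto_id
      simpa using tendsto_const_nhds.add this
    refine h1.congr' ?_
    filter_upwards [eventually_gt_atTop (0:ℝ)] with α hα
    field_simp
  exact tendsto_of_tendsto_of_tendsto_of_le_of_le' hl hu hlow hup
end
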